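/- If w = u_1 d u_2 d ... d u_M is formed by concatenating M ≥ 2 pairwise distinct words u_i (none containing the letter d) separated by single occurrences of a letter d, each u_i avoids Z_n, and for consecutive i the distinguished letters alternate so that any Z_{n-1}-copy avoiding both distinguished letters is impossible within u_i and u_{i+1}, then w avoids Z_{n+1}. -/

import Mathlib

/-- Zimin words over the alphabet `ℕ`. -/
def Zimin : ℕ → List ℕ
  | 0 => []
  | n + 1 => Zimin n ++ [n + 1] ++ Zimin n

/-- `X` is a copy of `Z_n`: it is obtained by substituting a nonempty word for
each letter of the Zimin word `Z_n`. -/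
def IsZiminCopy {α : Type*} (n : ℕ) (X : List α) : Prop :=
  ∃ σ : ℕ → List α, (∀ i, σ i ≠ []) ∧ X = (Zimin n).flatMap σ

/-- `w` contains a copy of `Z_n` as a contiguous subword (infix). -/
def ContainsZimin {α : Type*} (n : ℕ) (w : List α) : Prop :=
  ∃ X : List α, IsZiminCopy n X ∧ X <:+: w

namespace ConcatAvoidsAux

variable {α : Type*} {d : α}

/-- Two decompositions at a first occurrence of `d` agree. -/
theorem eq_of_d_aligned : ∀ {a : List α} {b x y : List α}, d ∉ a → d ∉ b →
    a ++ d :: x = b ++ d :: y → a = b ∧ x = y := by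
  intro a
  induction a with
  | nil =>
    intro b x y _ hb h
    cases b with
    | nil => simpa using h
    | cons c b =>
      simp only [List.nil_append, List.cons_append, List.cons.injEq] at h
      exact absurd (h.1 ▸ (List.mem_cons_self (a := c) (l := b))) hb
  | cons c a ih =>
    intro b x y ha hb h
    cases b with
    | nil =>
      simp only [List.nil_append, List.cons_append, List.cons.injEq] at h
      exact absurd (h.1.symm ▸ (List.mem_cons_self (a := c) (l := a))) ha
    | cons c' b =>
      simp only [List.cons_append, List.cons.injEq] at h
      obtain ⟨rfl, h⟩ := h
      obtain ⟨rfl, rfl⟩ := ih (fun hm => ha (List.mem_cons_of_mem _ hm))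
        (fun hm => hb (List.mem_cons_of_mem _ hm)) h
      exact ⟨rfl, rfl⟩

theorem first_split [DecidableEq α] : ∀ {l : List α}, d ∈ l →
    ∃ a b, l = a ++ d :: b ∧ d ∉ a := by
  intro l
  induction l with
  | nil => simp
  | cons c l ih =>
    intro h
    by_cases hc : d = c
    · exact ⟨[], l, by simp [hc], by simp⟩
    · have hd : d ∈ l := by
        rcases List.mem_cons.1 h with h | h
        · exact absurd h hc
        · exact h
      obtain ⟨a, b, rfl, ha⟩ := ih hd
      exact ⟨c :: a, b, rfl, by simp [ha, hc]⟩

theorem last_split [DecidableEq α] {l : List α} (h : d ∈ l) :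
    ∃ a b, l = a ++ d :: b ∧ d ∉ b := by
  obtain ⟨a, b, h1, h2⟩ := first_split (l := l.reverse) (by simpa using h)
  refine ⟨b.reverse, a.reverse, ?_, by simpa using h2⟩
  rw [← l.reverse_reverse, h1]
  simp

theorem prefix_of_prefix_dsep : ∀ (x : List α) {S y : List α}, d ∉ S →
    S <+: x ++ d :: y → S <+: x := by
  intro x
  induction x with
  | nil =>
    intro S y hS h
    cases S with
    | nil => exact List.nil_prefix
    | cons s S =>
      rw [List.nil_append, List.cons_prefix_cons] at h
      exact absurd (h.1 ▸ (List.mem_cons_self (a := s) (l := S))) hS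
  | cons c x ih =>
    intro S y hS h
    cases S with
    | nil => exact List.nil_prefix
    | cons s S =>
      rw [List.cons_append, List.cons_prefix_cons] at h
      rw [List.cons_prefix_cons]
      exact ⟨h.1, ih (fun hm => hS (List.mem_cons_of_mem _ hm)) h.2⟩

theorem suffix_of_suffix_dsep {x y S : List α} (hS : d ∉ S)
    (h : S <:+ x ++ d :: y) : S <:+ y := by
  rw [← List.reverse_prefix]
  have h' : S.reverse <+: y.reverse ++ d :: x.reverse := by
    rw [← List.reverse_suffix]
    simpa using h
  exact prefix_of_prefix_dsep _ (by simpa using hS) h'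

theorem infix_dsep {x y v : List α} (hv : d ∉ v) (h : v <:+: x ++ d :: y) :
    v <:+: x ∨ v <:+: y := by
  obtain ⟨s, t, hst⟩ := h
  rcases le_or_gt s.length x.length with hle | hlt
  · have hs : s <+: x := by
      refine List.prefix_of_prefix_length_le ⟨v ++ t, by simpa [List.append_assoc] using hst⟩
        ⟨d :: y, rfl⟩ hle
    obtain ⟨x₂, rfl⟩ := hs
    have : v ++ t = x₂ ++ d :: y := by
      have := hst
      simp only [List.append_assoc] at this
      exact List.append_cancel_left this
    left
    have hvx₂ : v <+: x₂ := prefix_of_prefix_dsep x₂ hv ⟨t, this⟩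
    exact hvx₂.isInfix.trans ⟨s, [], by simp⟩
  · have hs : x ++ [d] <+: s := by
      refine List.prefix_of_prefix_length_le (show x ++ [d] <+: x ++ d :: y from ⟨y, by simp⟩)
        ⟨v ++ t, by simpa [List.append_assoc] using hst⟩ (by simpa using hlt)
    obtain ⟨s₂, rfl⟩ := hs
    right
    have : s₂ ++ v ++ t = y := by
      have := hst
      simp only [List.append_assoc] at this
      have := List.append_cancel_left this
      simpa [List.append_assoc] using List.append_cancel_left this
    exact ⟨s₂, t, this⟩

theorem intercalate_one (u : List α) : List.intercalate [d] [u] = u := by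
  simp [List.intercalate]

theorem intercalate_cons₂ (u v : List α) (us : List (List α)) :
    List.intercalate [d] (u :: v :: us) = u ++ d :: List.intercalate [d] (v :: us) := by
  simp [List.intercalate]

theorem intercalate_cons_ne (u : List α) {us : List (List α)} (h : us ≠ []) :
    List.intercalate [d] (u :: us) = u ++ d :: List.intercalate [d] us := by
  cases us with
  | nil => exact absurd rfl h
  | cons v us => exact intercalate_cons₂ u v us

/-- An infix of the interleaving that avoids `d` is an infix of one of the blocks. -/
theorem infix_intercalate [DecidableEq α] : ∀ {us : List (List α)}, us ≠ [] →
    ∀ {v : List α}, d ∉ v → v <:+: List.intercalate [d] us → ∃ u ∈ us, v <:+: u := by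
  intro us
  induction us with
  | nil => simp
  | cons u us ih =>
    intro _ v hv h
    cases us with
    | nil =>
      rw [intercalate_one] at h
      exact ⟨u, by simp, h⟩
    | cons u' us' =>
      rw [intercalate_cons₂] at h
      rcases infix_dsep hv h with h | h
      · exact ⟨u, by simp, h⟩
      · obtain ⟨w, hw, hvw⟩ := ih (by simp) hv h
        exact ⟨w, List.mem_cons_of_mem _ hw, hvw⟩

/-- Structure of a double-`d` pattern inside an interleaving. -/
theorem intercalate_two_d [DecidableEq α] : ∀ {us : List (List α)}, (∀ u ∈ us, d ∉ u) →
    ∀ {s g t : List α}, d ∉ g →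
    List.intercalate [d] us = s ++ d :: (g ++ d :: t) →
    ∃ l r, us = l ++ g :: r ∧ l ≠ [] ∧ r ≠ [] ∧
      s = List.intercalate [d] l ∧ t = List.intercalate [d] r := by
  intro us
  induction us with
  | nil =>
    intro _ s g t _ h
    simp [List.intercalate] at h
  | cons u us ih =>
    intro hd s g t hg h
    cases us with
    | nil =>
      rw [intercalate_one] at h
      exact absurd (h ▸ (by simp : d ∈ s ++ d :: (g ++ d :: t))) (hd u (by simp))
    | cons u' us' =>
      rw [intercalate_cons₂] at h
      by_cases hs : d ∈ s
      · obtain ⟨s₁, s₂, rfl, hs₁⟩ := first_split hs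
        rw [List.append_assoc, List.cons_append] at h
        obtain ⟨rfl, h2⟩ := eq_of_d_aligned (hd u (by simp)) hs₁ h
        obtain ⟨l, r, hlr, hl, hr, hsl, htr⟩ :=
          ih (fun x hx => hd x (List.mem_cons_of_mem _ hx)) hg h2
        refine ⟨u :: l, r, by rw [hlr]; simp, by simp, hr, ?_, htr⟩
        rw [intercalate_cons_ne u hl, hsl]
      · obtain ⟨rfl, h2⟩ := eq_of_d_aligned (hd u (by simp)) hs h
        cases us' with
        | nil =>
          rw [intercalate_one] at h2
          exact absurd (h2 ▸ (by simp : d ∈ g ++ d :: t)) (hd u' (by simp))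
        | cons u₂ us₂ =>
          rw [intercalate_cons₂] at h2
          obtain ⟨rfl, rfl⟩ := eq_of_d_aligned (hd u' (by simp)) hg h2
          exact ⟨[u], u₂ :: us₂, rfl, by simp, by simp, (intercalate_one u).symm, rfl⟩

theorem nodup_split_unique {us l₁ r₁ l₂ r₂ : List α} {g : α}
    (hnd : us.Nodup) (h₁ : us = l₁ ++ g :: r₁) (h₂ : us = l₂ ++ g :: r₂) :
    l₁ = l₂ ∧ r₁ = r₂ := by
  have hg₁ : g ∉ l₁ := by
    rw [h₁, List.nodup_append] at hnd
    exact fun hm => hnd.2.2 g hm g (List.mem_cons_self (a := g) (l := r₁)) rfl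
  have hg₂ : g ∉ l₂ := by
    rw [h₂, List.nodup_append] at hnd
    exact fun hm => hnd.2.2 g hm g (List.mem_cons_self (a := g) (l := r₂)) rfl
  exact eq_of_d_aligned hg₁ hg₂ (h₁ ▸ h₂)

end ConcatAvoidsAux

open ConcatAvoidsAux in
/-- Core of Lemma 4.1. -/
theorem concat_avoids {q n : ℕ} (hn : 1 ≤ n) (d : Fin q)
    (us : List (List (Fin q))) (hM : 2 ≤ us.length) (hdistinct : us.Nodup)
    (hd : ∀ u ∈ us, d ∉ u)
    (hZn : ∀ u ∈ us, ¬ ContainsZimin n u)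
    (c : ℕ → Fin q)
    (hc : ∀ (i : ℕ) (h : i < us.length), ∀ v : List (Fin q),
      v <:+: us[i] → c i ∉ v → ¬ ContainsZimin (n - 1) v)
    (halt₁ : ∀ (i : ℕ) (h : i + 1 < us.length), c i ∉ us[i + 1])
    (halt₂ : ∀ (i : ℕ) (h : i + 1 < us.length), c (i + 1) ∉ us[i]'(by omega)) :
    ¬ ContainsZimin (n + 1) (List.intercalate [d] us) := by
  obtain ⟨k, rfl⟩ : ∃ k, n = k + 1 := ⟨n - 1, by omega⟩
  rintro ⟨X, ⟨σ, hσ, rfl⟩, hinf⟩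
  -- decompose the Zimin copy
  set A' : List (Fin q) := (Zimin k).flatMap σ with hA'
  set B' : List (Fin q) := σ (k + 1) with hB'
  set B : List (Fin q) := σ (k + 1 + 1) with hB
  set A : List (Fin q) := A' ++ B' ++ A' with hA
  have hXA : (Zimin (k + 1 + 1)).flatMap σ = A ++ B ++ A := by
    simp [Zimin, List.flatMap_append, hA, hA', hB', hB, List.append_assoc]
  rw [hXA] at hinf
  obtain ⟨p, qq, hw⟩ := hinf
  have husne : us ≠ [] := by rintro rfl; simp at hM
  by_cases hdA : d ∈ A
  · by_cases h2 : 2 ≤ A.count d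
    · -- case: at least two d's in A
      obtain ⟨a, r, hAr, har⟩ := first_split hdA
      have hdr : d ∈ r := by
        by_contra hdr
        rw [hAr] at h2
        simp [List.count_append, List.count_cons,
          List.count_eq_zero_of_not_mem har, List.count_eq_zero_of_not_mem hdr] at h2
      obtain ⟨g, b, hrg, hgd⟩ := first_split hdr
      have hAfull : A = a ++ d :: (g ++ d :: b) := by rw [hAr, hrg]
      rw [hAfull] at hw
      have e₁ : List.intercalate [d] us =
          (p ++ a) ++ d :: (g ++ d :: (b ++ B ++ (a ++ d :: (g ++ d :: b)) ++ qq)) := by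
        rw [← hw]; simp [List.append_assoc]
      have e₂ : List.intercalate [d] us =
          (p ++ (a ++ d :: (g ++ d :: b)) ++ B ++ a) ++ d :: (g ++ d :: (b ++ qq)) := by
        rw [← hw]; simp [List.append_assoc]
      obtain ⟨l₁, r₁, hsplit₁, -, -, hs₁, -⟩ := intercalate_two_d hd hgd e₁
      obtain ⟨l₂, r₂, hsplit₂, -, -, hs₂, -⟩ := intercalate_two_d hd hgd e₂
      obtain ⟨hl12, -⟩ := nodup_split_unique hdistinct hsplit₁ hsplit₂
      have : p ++ a = p ++ (a ++ d :: (g ++ d :: b)) ++ B ++ a := by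
        rw [hs₁, hs₂, hl12]
      have := congrArg List.length this
      simp only [List.length_append, List.length_cons] at this
      omega
    · -- case: exactly one d in A
      have hcnt : A.count d = 1 := by
        have h1 : 1 ≤ A.count d := List.count_pos_iff.2 hdA
        omega
      have hA'cnt : A'.count d = 0 := by
        rw [hA] at hcnt
        simp [List.count_append] at hcnt
        omega
      have hdA' : d ∉ A' := by
        intro hm
        exact absurd hA'cnt (List.count_pos_iff.2 hm).ne'
      have hdB' : d ∈ B' := by
        rcases (List.mem_append.1 hdA) with hm | hm
        · rcases List.mem_append.1 hm with hm | hm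
          · exact absurd hm hdA'
          · exact hm
        · exact absurd hm hdA'
      obtain ⟨x, y, hB'xy, hx⟩ := first_split hdB'
      have hy : d ∉ y := by
        intro hym
        rw [hA, hB'xy] at hcnt
        have := List.count_pos_iff.2 hym
        simp [List.count_append, List.count_cons,
          List.count_eq_zero_of_not_mem hdA', List.count_eq_zero_of_not_mem hx] at hcnt
        omega
      set P : List (Fin q) := A' ++ x with hP
      set S : List (Fin q) := y ++ A' with hS
      have hdP : d ∉ P := by
        rw [hP]; simp only [List.mem_append]; tauto
      have hdS : d ∉ S := by
        rw [hS]; simp only [List.mem_append]; tauto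
      have hAPS : A = P ++ d :: S := by
        rw [hA, hB'xy, hP, hS]; simp [List.append_assoc]
      rw [hAPS] at hw
      set T : List (Fin q) := S ++ B ++ P with hT
      obtain ⟨G₁, G, hGsplit, hGd⟩ := last_split (d := d) (l := d :: T) (List.mem_cons_self (a := d) (l := T))
      have ePS : List.intercalate [d] us =
          (p ++ P ++ G₁) ++ d :: (G ++ d :: (S ++ qq)) := by
        rw [← hw]
        have lhs_eq : p ++ (P ++ d :: S ++ B ++ (P ++ d :: S)) ++ qq
            = p ++ P ++ ((d :: T) ++ d :: (S ++ qq)) := by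
          rw [hT]; simp [List.append_assoc]
        rw [lhs_eq, hGsplit]
        try simp [List.append_assoc]
      obtain ⟨l, r, hsplit, hl, hr, hsl, htr⟩ := intercalate_two_d hd hGd ePS
      have hrlen : 1 ≤ r.length := List.length_pos_iff.2 hr
      have hm1 : l.length < us.length := by
        rw [hsplit, List.length_append, List.length_cons]; omega
      have hm2 : l.length + 1 < us.length := by
        rw [hsplit, List.length_append, List.length_cons]; omega
      have hGm : us[l.length]'hm1 = G := by
        simp [hsplit, List.getElem_append_right]
      -- P is a suffix of G
      have hPsufT : P <:+ T := by rw [hT]; exact List.suffix_append (S ++ B) P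
      have hPG : P <:+ G := by
        refine suffix_of_suffix_dsep (x := G₁) hdP ?_
        rw [← hGsplit]
        exact hPsufT.trans (T.suffix_cons d)
      have hA'P : A' <+: P := hP ▸ List.prefix_append A' x
      have hA'G : A' <:+: G := hA'P.isInfix.trans hPG.isInfix
      by_cases hcm : c l.length ∈ A'
      · -- contradiction with halt₁
        cases r with
        | nil => exact absurd rfl hr
        | cons g' r' =>
          have hSg' : S <+: g' := by
            cases r' with
            | nil =>
              rw [intercalate_one] at htr
              exact ⟨qq, htr⟩
            | cons g'' r'' =>
              rw [intercalate_cons₂] at htr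
              exact prefix_of_prefix_dsep g' hdS ⟨qq, htr⟩
          have hg'm : us[l.length + 1]'hm2 = g' := by
            simp [hsplit, List.getElem_append_right]
          have hcmem : c l.length ∈ us[l.length + 1]'hm2 := by
            rw [hg'm]
            exact hSg'.subset (hS ▸ List.mem_append_right y hcm)
          exact halt₁ l.length hm2 hcmem
      · -- contradiction with hc
        have hinfix : A' <:+: us[l.length]'hm1 := by rw [hGm]; exact hA'G
        refine hc l.length hm1 A' hinfix hcm ?_
        refine ⟨A', ⟨σ, hσ, ?_⟩, List.infix_rfl⟩
        simp [hA']
  · -- case: no d in A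
    have hAinf : A <:+: List.intercalate [d] us :=
      ⟨p, B ++ A ++ qq, by rw [← hw]; simp [List.append_assoc]⟩
    obtain ⟨u, hu, hAu⟩ := infix_intercalate husne hdA hAinf
    exact hZn u hu ⟨A, ⟨σ, hσ, by rw [hA, hA', hB']; simp [Zimin, List.flatMap_append]⟩, hAu⟩
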